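/- For every natural number k there exists a constant C > 0, depending only on k, with the following property: for every nondegenerate triangle τ ⊂ ℝ² with barycentric coordinate functions λ₁, λ₂, λ₃ and element bubble function ψ_τ = 27·λ₁·λ₂·λ₃, and for every polynomial function v : ℝ² → ℝ of total degree at most k, one has ∫_τ ψ_τ v² dx ≤ ∫_τ v² dx ≤ C ∫_τ ψ_τ v² dx, where the integrals are taken with respect to two-dimensional Lebesgue measure restricted to τ. Equivalently, ‖v‖_{0,τ} ≤ C‖ψ_τ^{1/2} v‖_{0,τ} ≤ C‖v‖_{0,τ}. -/

import Mathlib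

open MeasureTheory

namespace EBNE
open MvPolynomial
noncomputable section

abbrev E2 := EuclideanSpace ℝ (Fin 2)
def refV : Fin 3 → E2 := ![0, EuclideanSpace.single 0 1, EuclideanSpace.single 1 1]
def Δref : Set E2 := convexHull ℝ (Set.range refV)
def ψref : E2 → ℝ := fun x => 27 * ((1 - x 0 - x 1) * (x 0 * x 1))
def Uref : Set E2 := {x | 0 < x 0 ∧ 0 < x 1 ∧ x 0 + x 1 < 1}

lemma lin0 : IsLinearMap ℝ (fun x : E2 => x 0) := ⟨fun _ _ => rfl, fun _ _ => rfl⟩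
lemma lin1 : IsLinearMap ℝ (fun x : E2 => x 1) := ⟨fun _ _ => rfl, fun _ _ => rfl⟩
lemma linsum : IsLinearMap ℝ (fun x : E2 => x 0 + x 1) :=
  ⟨fun x y => by simp [PiLp.add_apply]; ring, fun c x => by simp [PiLp.smul_apply]; ring⟩

lemma openU : IsOpen Uref := by
  have h0 : Continuous fun x : E2 => x 0 := (EuclideanSpace.proj (0 : Fin 2)).continuous
  have h1 : Continuous fun x : E2 => x 1 := (EuclideanSpace.proj (1 : Fin 2)).continuous
  exact (isOpen_lt continuous_const h0).inter ((isOpen_lt continuous_const h1).inter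
    (isOpen_lt (h0.add h1) continuous_const))

lemma Δref_sub : Δref ⊆ {x : E2 | 0 ≤ x 0 ∧ 0 ≤ x 1 ∧ x 0 + x 1 ≤ 1} := by
  apply convexHull_min
  · rintro y ⟨i, rfl⟩
    fin_cases i <;> simp [refV, EuclideanSpace.single_apply]
  · exact ((convex_halfSpace_ge lin0 0).inter ((convex_halfSpace_ge lin1 0).inter
      (convex_halfSpace_le linsum 1)))

lemma Uref_sub : Uref ⊆ Δref := by
  rintro x ⟨h0, h1, hs⟩
  have := (convex_convexHull ℝ (Set.range refV)).sum_mem (t := Finset.univ)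
    (w := ![1 - x 0 - x 1, x 0, x 1]) (z := refV)
    (by intro i _; fin_cases i <;> simp <;> linarith)
    (by simp [Fin.sum_univ_three]; ring)
    (by intro i _; exact subset_convexHull ℝ _ ⟨i, rfl⟩)
  convert this using 1
  rfl
  refine (PiLp.ext ?_).symm
  intro j
  fin_cases j <;>
    simp [Fin.sum_univ_three, refV, PiLp.add_apply, PiLp.smul_apply,
      EuclideanSpace.single_apply]

lemma Δref_closure : Δref ⊆ closure Uref := by
  intro x hx
  obtain ⟨h0, h1, hs⟩ := Δref_sub hx
  set c : E2 := (EuclideanSpace.single 0 (1/3 : ℝ)) + EuclideanSpace.single 1 (1/3) with hc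
  have tend : Filter.Tendsto (fun t : ℝ => x + t • (c - x)) (nhdsWithin 0 (Set.Ioi 0)) (nhds x) := by
    have hcont : Continuous (fun t : ℝ => x + t • (c - x)) :=
      continuous_const.add (continuous_id.smul continuous_const)
    have := hcont.tendsto 0
    simp only [zero_smul, add_zero] at this
    exact this.mono_left nhdsWithin_le_nhds
  refine mem_closure_of_tendsto tend ?_
  filter_upwards [Filter.inter_mem (self_mem_nhdsWithin)
    (nhdsWithin_le_nhds (Iio_mem_nhds (by norm_num : (0:ℝ) < 1)))] with t ht
  obtain ⟨ht0, ht1⟩ := ht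
  simp only [Set.mem_Ioi] at ht0
  simp only [Set.mem_Iio] at ht1
  have hxt : ∀ j, (x + t • (c - x)) j = x j + t * (c j - x j) := by
    intro j; simp [PiLp.add_apply, PiLp.smul_apply, PiLp.sub_apply]
  have hc0 : c 0 = 1/3 := by simp [hc, EuclideanSpace.single_apply, PiLp.add_apply]
  have hc1 : c 1 = 1/3 := by simp [hc, EuclideanSpace.single_apply, PiLp.add_apply]
  refine ⟨?_, ?_, ?_⟩ <;> show _ <;> simp only [Set.mem_setOf_eq, hxt, hc0, hc1] <;> nlinarith

lemma compactΔ : IsCompact Δref := (Set.finite_range refV).isCompact_convexHull ℝ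
lemma measΔ : MeasurableSet Δref := compactΔ.isClosed.measurableSet
instance : CompactSpace ↥Δref := isCompact_iff_compactSpace.mp compactΔ

def μΔ : Measure ↥Δref := volume.comap Subtype.val

instance : IsFiniteMeasure μΔ := by
  constructor
  rw [μΔ, MeasurableEmbedding.comap_apply (MeasurableEmbedding.subtype_coe measΔ)]
  exact lt_of_le_of_lt (measure_mono (by simp)) compactΔ.measure_lt_top

lemma contψ : Continuous ψref := by
  have h0 : Continuous fun x : E2 => x 0 := (EuclideanSpace.proj (0 : Fin 2)).continuous
  have h1 : Continuous fun x : E2 => x 1 := (EuclideanSpace.proj (1 : Fin 2)).continuous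
  exact continuous_const.mul (((continuous_const.sub h0).sub h1).mul (h0.mul h1))

lemma contcoords : Continuous fun x : E2 => (fun i => x i : Fin 2 → ℝ) :=
  continuous_pi fun i => (EuclideanSpace.proj i).continuous

lemma contEval (p : MvPolynomial (Fin 2) ℝ) :
    Continuous fun x : E2 => eval (fun i => x i) p :=
  p.continuous_eval.comp contcoords

def ψC : C(↥Δref, ℝ) := ⟨fun x => ψref x.val, contψ.comp continuous_subtype_val⟩

lemma cmIntegrable (f : C(↥Δref, ℝ)) : Integrable f μΔ :=
  (integrable_const ‖f‖).mono' f.continuous.aestronglyMeasurable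
    (Filter.Eventually.of_forall fun x => f.norm_coe_le_norm x)

def Jc : C(↥Δref, ℝ) →L[ℝ] ℝ :=
  LinearMap.mkContinuous
    { toFun := fun f => ∫ x, f x ∂μΔ
      map_add' := fun f g => integral_add (cmIntegrable f) (cmIntegrable g)
      map_smul' := fun c f => by simpa using integral_smul c (fun x => f x) }
    (μΔ Set.univ).toReal
    (fun f => by
      rw [mul_comm]
      exact norm_integral_le_of_norm_le_const
        (Filter.Eventually.of_forall fun x => f.norm_coe_le_norm x))

lemma Jc_apply (f : C(↥Δref, ℝ)) : Jc f = ∫ x, f x ∂μΔ := rfl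

lemma bridge (g : E2 → ℝ) : ∫ x : ↥Δref, g ↑x ∂μΔ = ∫ x in Δref, g x :=
  integral_subtype_comap measΔ g

variable (k : ℕ)

def Φ : MvPolynomial.restrictTotalDegree (Fin 2) ℝ k →ₗ[ℝ] C(↥Δref, ℝ) where
  toFun p := ⟨fun x => eval (fun i => (x : E2) i) p.1, (contEval p.1).comp continuous_subtype_val⟩
  map_add' p q := by ext x; simp
  map_smul' c p := by ext x; simp [MvPolynomial.smul_eval]

lemma ψref_nonneg {x : E2} (hx : x ∈ Δref) : 0 ≤ ψref x := by
  obtain ⟨h0, h1, hs⟩ := Δref_sub hx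
  have : 0 ≤ 1 - x 0 - x 1 := by linarith
  have h27 : (0:ℝ) ≤ 27 := by norm_num
  exact mul_nonneg h27 (mul_nonneg this (mul_nonneg h0 h1))

lemma q1_eq (p : MvPolynomial.restrictTotalDegree (Fin 2) ℝ k) :
    Jc (ψC * Φ k p * Φ k p) = ∫ x in Δref, ψref x * (eval (fun i => x i) p.1)^2 := by
  rw [Jc_apply, ← bridge (fun y => ψref y * (eval (fun i => y i) p.1)^2)]
  apply integral_congr_ae
  apply Filter.Eventually.of_forall
  intro x
  simp [ψC, Φ]
  ring

lemma q2_eq (p : MvPolynomial.restrictTotalDegree (Fin 2) ℝ k) :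
    Jc (Φ k p * Φ k p) = ∫ x in Δref, (eval (fun i => x i) p.1)^2 := by
  rw [Jc_apply, ← bridge (fun y => (eval (fun i => y i) p.1)^2)]
  apply integral_congr_ae
  apply Filter.Eventually.of_forall
  intro x
  simp [Φ]
  ring

lemma pos_q1 (p : MvPolynomial.restrictTotalDegree (Fin 2) ℝ k) (h : Φ k p ≠ 0) :
    0 < Jc (ψC * Φ k p * Φ k p) := by
  rw [q1_eq]
  set g : E2 → ℝ := fun y => ψref y * (eval (fun i => y i) p.1)^2 with hg
  have contg : Continuous g := contψ.mul ((contEval p.1).pow 2)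
  have hx0 : ∃ x0 ∈ Uref, eval (fun i => x0 i) p.1 ≠ 0 := by
    by_contra hcon
    push_neg at hcon
    apply h
    ext x
    have hcl : Δref ⊆ {y : E2 | eval (fun i => y i) p.1 = 0} := by
      refine Set.Subset.trans Δref_closure (closure_minimal hcon ?_)
      exact isClosed_eq (contEval p.1) continuous_const
    simpa [Φ] using hcl x.2
  obtain ⟨x0, hx0U, hx0v⟩ := hx0
  have hψpos : 0 < ψref x0 := by
    obtain ⟨h0, h1, hs⟩ := hx0U
    have : 0 < 1 - x0 0 - x0 1 := by linarith
    have h27 : (0:ℝ) < 27 := by norm_num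
    exact mul_pos h27 (mul_pos this (mul_pos h0 h1))
  have hgpos : 0 < g x0 := by
    have : 0 < (eval (fun i => x0 i) p.1)^2 := by positivity
    exact mul_pos hψpos this
  set V : Set E2 := Uref ∩ g ⁻¹' (Set.Ioi (g x0 / 2)) with hV
  have hVopen : IsOpen V := openU.inter (contg.isOpen_preimage _ isOpen_Ioi)
  have hx0V : x0 ∈ V := ⟨hx0U, by simp [Set.mem_Ioi]; linarith⟩
  have hVsub : V ⊆ Δref := Set.Subset.trans Set.inter_subset_left Uref_sub
  have hgInt : IntegrableOn g Δref := contg.continuousOn.integrableOn_compact compactΔ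
  have h1 : ∫ x in V, g x ≤ ∫ x in Δref, g x := by
    apply setIntegral_mono_set hgInt
    · exact ae_restrict_of_forall_mem measΔ fun x hx =>
        mul_nonneg (ψref_nonneg hx) (sq_nonneg _)
    · exact HasSubset.Subset.eventuallyLE hVsub
  have hVpos : 0 < (volume V).toReal := by
    have := hVopen.measure_pos volume ⟨x0, hx0V⟩
    have hne : volume V ≠ ⊤ := ne_top_of_le_ne_top compactΔ.measure_lt_top.ne (measure_mono hVsub)
    exact ENNReal.toReal_pos this.ne' hne
  have h2 : g x0 / 2 * (volume V).toReal ≤ ∫ x in V, g x := by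
    apply setIntegral_ge_of_const_le_real hVopen.measurableSet
    · exact (lt_of_le_of_lt (measure_mono hVsub) compactΔ.measure_lt_top).ne
    · intro x hx; exact le_of_lt hx.2
    · exact hgInt.mono_set hVsub
  have : 0 < g x0 / 2 * (volume V).toReal := by positivity
  linarith

lemma arith_aux {m M A B d : ℝ} (hm : 0 < m) (hM : 0 ≤ M) (hd : 0 < d) (hA : 0 ≤ A)
    (hmin : m ≤ d * A) (hmax : d * B ≤ M) : B ≤ (M / m + 1) * A := by
  have h1 : M / m * m = M := div_mul_cancel₀ _ hm.ne'
  have h2 : 0 ≤ M / m := div_nonneg hM hm.le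
  have h3 : d * B ≤ M / m * (d * A) := by
    calc d * B ≤ M := hmax
      _ = M / m * m := h1.symm
      _ ≤ M / m * (d * A) := mul_le_mul_of_nonneg_left hmin h2
  have h3' : d * B ≤ d * (M / m * A) := by
    have he : d * (M / m * A) = M / m * (d * A) := by ring
    linarith
  have h4 : B ≤ M / m * A := le_of_mul_le_mul_left h3' hd
  nlinarith

set_option maxHeartbeats 2000000 in
lemma refKey : ∃ C : ℝ, 0 < C ∧ ∀ p : MvPolynomial.restrictTotalDegree (Fin 2) ℝ k,
    Jc (Φ k p * Φ k p) ≤ C * Jc (ψC * Φ k p * Φ k p) := by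
  classical
  set W := LinearMap.range (Φ k) with hW
  have q1smul : ∀ (c : ℝ) (f : C(↥Δref, ℝ)), Jc (ψC * (c • f) * (c • f)) =
      (c * c) * Jc (ψC * f * f) := by
    intro c f
    have : ψC * (c • f) * (c • f) = (c * c) • (ψC * f * f) := by
      ext x
      simp [ψC]
      ring
    rw [this, _root_.map_smul, smul_eq_mul]
  have q2smul : ∀ (c : ℝ) (f : C(↥Δref, ℝ)), Jc ((c • f) * (c • f)) =
      (c * c) * Jc (f * f) := by
    intro c f
    have : (c • f) * (c • f) = (c * c) • (f * f) := by
      ext x; simp; ring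
    rw [this, _root_.map_smul, smul_eq_mul]
  have q2nonneg : ∀ f : C(↥Δref, ℝ), 0 ≤ Jc (f * f) := by
    intro f
    rw [Jc_apply]
    exact integral_nonneg fun x => mul_self_nonneg _
  have q1nonneg : ∀ w : ↥W, 0 ≤ Jc (ψC * ↑w * ↑w) := by
    intro w
    obtain ⟨p, hp⟩ := w.2
    rw [← hp, q1_eq]
    apply setIntegral_nonneg measΔ
    intro x hx
    exact mul_nonneg (ψref_nonneg hx) (sq_nonneg _)
  set S : Set ↥W := Metric.sphere 0 1 with hS
  have hScomp : IsCompact S := isCompact_sphere 0 1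
  set onep : MvPolynomial.restrictTotalDegree (Fin 2) ℝ k := ⟨(1 : MvPolynomial (Fin 2) ℝ), by
      simp [MvPolynomial.mem_restrictTotalDegree]⟩ with honep
  have hΦ1ne : Φ k onep ≠ 0 := by
    intro hzero
    have : (Φ k onep) ⟨refV 0, subset_convexHull ℝ _ ⟨0, rfl⟩⟩ = 0 := by rw [hzero]; rfl
    simp [honep, Φ] at this
  set w1 : ↥W := ⟨Φ k onep, LinearMap.mem_range_self _ _⟩ with hw1
  have hw1ne : w1 ≠ 0 := fun hzero => hΦ1ne (by simpa [hw1] using congrArg Subtype.val hzero)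
  have hSne : S.Nonempty := by
    refine ⟨‖w1‖⁻¹ • w1, ?_⟩
    simp only [hS, mem_sphere_zero_iff_norm]
    erw [show ‖(‖w1‖⁻¹ : ℝ) • w1‖ = ‖(‖w1‖⁻¹ : ℝ)‖ * ‖w1‖ from
      by letI := NormedSpace.toNormSMulClass (𝕜 := ℝ) (E := ↥W); exact norm_smul (α := ℝ) (β := ↥W) _ _, norm_inv, norm_norm]
    exact inv_mul_cancel₀ (norm_ne_zero_iff.mpr hw1ne)
  have hcoe : Continuous fun w : ↥W => (↑w : C(↥Δref, ℝ)) := continuous_subtype_val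
  have hq1cont : Continuous fun w : ↥W => Jc (ψC * ↑w * ↑w) :=
    Jc.continuous.comp ((continuous_const.mul hcoe).mul hcoe)
  have hq2cont : Continuous fun w : ↥W => Jc (↑w * ↑w) :=
    Jc.continuous.comp ((hcoe.mul hcoe))
  obtain ⟨u, huS, humin⟩ := hScomp.exists_isMinOn hSne hq1cont.continuousOn
  obtain ⟨z, hzS, hzmax⟩ := hScomp.exists_isMaxOn hSne hq2cont.continuousOn
  set m : ℝ := Jc (ψC * ↑u * ↑u) with hm
  set M : ℝ := Jc (↑z * ↑z) with hM
  have hmpos : 0 < m := by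
    obtain ⟨p, hp⟩ := u.2
    rw [hm, ← hp]
    apply pos_q1
    rw [hp]
    intro hc
    have hu0 : u = 0 := Subtype.ext hc
    have : ‖u‖ = 1 := mem_sphere_zero_iff_norm.mp huS
    rw [hu0] at this
    simp at this
  have hMnn : 0 ≤ M := q2nonneg _
  refine ⟨M / m + 1, by positivity, ?_⟩
  intro p
  set w : ↥W := ⟨Φ k p, LinearMap.mem_range_self _ _⟩ with hw
  rcases eq_or_ne w 0 with h0 | hne
  · have : Φ k p = 0 := by
      have := congrArg (Subtype.val) h0
      simpa [hw] using this
    rw [this]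
    simp
  · have hΦpne : Φ k p ≠ 0 := fun h => hne (Subtype.ext h)
    set c : ℝ := ‖w‖ with hc
    have hcpos : 0 < c := norm_pos_iff.mpr hne
    set u' : ↥W := c⁻¹ • w with hu'
    have hu'S : u' ∈ S := by
      erw [hS, mem_sphere_zero_iff_norm, hu',
        show ‖(c⁻¹ : ℝ) • w‖ = ‖(c⁻¹ : ℝ)‖ * ‖w‖ from by letI := NormedSpace.toNormSMulClass (𝕜 := ℝ) (E := ↥W); exact norm_smul (α := ℝ) (β := ↥W) _ _,
        norm_inv, norm_norm]
      exact inv_mul_cancel₀ (norm_ne_zero_iff.mpr hne)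
    have hcoeu' : (↑u' : C(↥Δref, ℝ)) = c⁻¹ • (Φ k p) := rfl
    have e1 : Jc (ψC * ↑u' * ↑u') = (c⁻¹ * c⁻¹) * Jc (ψC * Φ k p * Φ k p) := by
      rw [hcoeu', q1smul]
    have e2 : Jc (↑u' * ↑u') = (c⁻¹ * c⁻¹) * Jc (Φ k p * Φ k p) := by
      rw [hcoeu', q2smul]
    have hmin : m ≤ (c⁻¹ * c⁻¹) * Jc (ψC * Φ k p * Φ k p) := by rw [← e1]; exact humin hu'S
    have hmax : (c⁻¹ * c⁻¹) * Jc (Φ k p * Φ k p) ≤ M := by rw [← e2]; exact hzmax hu'S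
    have hq1w : 0 ≤ Jc (ψC * Φ k p * Φ k p) := q1nonneg w
    have hc2 : 0 < c⁻¹ * c⁻¹ := by positivity
    exact arith_aux hmpos hMnn hc2 hq1w hmin hmax

lemma refBound : ∃ C : ℝ, 0 < C ∧ ∀ p : MvPolynomial (Fin 2) ℝ, p.totalDegree ≤ k →
    (∫ x in Δref, (eval (fun i => x i) p)^2) ≤
      C * ∫ x in Δref, ψref x * (eval (fun i => x i) p)^2 := by
  obtain ⟨C, hC, h⟩ := refKey k
  refine ⟨C, hC, fun p hp => ?_⟩
  have h2 := h ⟨p, (MvPolynomial.mem_restrictTotalDegree _ _ _).mpr hp⟩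
  rwa [q2_eq, q1_eq] at h2

lemma totalDegree_bind₁_le (g : Fin 2 → MvPolynomial (Fin 2) ℝ)
    (hg : ∀ j, (g j).totalDegree ≤ 1) (p : MvPolynomial (Fin 2) ℝ) :
    (bind₁ g p).totalDegree ≤ p.totalDegree := by
  conv_lhs => rw [p.as_sum]
  rw [map_sum]
  refine (totalDegree_finset_sum _ _).trans (Finset.sup_le ?_)
  intro d hd
  rw [bind₁_monomial]
  refine (totalDegree_mul _ _).trans ?_
  rw [totalDegree_C, zero_add]
  refine (totalDegree_finset_prod _ _).trans ?_
  refine le_trans (Finset.sum_le_sum fun i _ => (totalDegree_pow _ _).trans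
    (Nat.mul_le_mul_left (d i) (hg i))) ?_
  simp only [mul_one]
  calc ∑ i ∈ d.support, d i = d.sum fun _ e => e := rfl
    _ ≤ p.totalDegree := le_totalDegree hd

lemma deg_aff_le (c b e : ℝ) :
    (C c + C b * X 0 + C e * X 1 : MvPolynomial (Fin 2) ℝ).totalDegree ≤ 1 := by
  refine (totalDegree_add _ _).trans (max_le ((totalDegree_add _ _).trans (max_le ?_ ?_)) ?_)
  · simp [totalDegree_C]
  · exact (totalDegree_mul _ _).trans (by simp [totalDegree_C, totalDegree_X])
  · exact (totalDegree_mul _ _).trans (by simp [totalDegree_C, totalDegree_X])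

lemma amgm27 (a b c : ℝ) (ha : 0 ≤ a) (hb : 0 ≤ b) (hc : 0 ≤ c) (h : a + b + c = 1) :
    27 * a * b * c ≤ 1 := by
  nlinarith [sq_nonneg (a - b), sq_nonneg (b - c), sq_nonneg (a - c), sq_nonneg (a + b - 2*c),
    mul_nonneg ha hb, mul_nonneg hb hc, mul_nonneg ha hc]

variable (a : Fin 3 → E2)

def Mlin : E2 →ₗ[ℝ] E2 where
  toFun x := x 0 • (a 1 - a 0) + x 1 • (a 2 - a 0)
  map_add' x y := by simp only [PiLp.add_apply]; module
  map_smul' c x := by simp only [PiLp.smul_apply, smul_eq_mul, RingHom.id_apply]; module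

def Taff : E2 →ᵃ[ℝ] E2 :=
  AffineMap.mk' (fun x => Mlin a x + a 0) (Mlin a) 0 (by simp)

lemma Taff_apply (x : E2) : Taff a x = Mlin a x + a 0 := rfl
lemma Mlin_apply (x : E2) : Mlin a x = x 0 • (a 1 - a 0) + x 1 • (a 2 - a 0) := rfl

lemma Taff_coord (x : E2) (j : Fin 2) :
    (Taff a x) j = a 0 j + x 0 * (a 1 j - a 0 j) + x 1 * (a 2 j - a 0 j) := by
  rw [Taff_apply, Mlin_apply]
  simp [PiLp.add_apply, PiLp.smul_apply, PiLp.sub_apply]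
  ring

lemma L_comp_gen (L : E2 →ᵃ[ℝ] ℝ) (x : E2) :
    L (Taff a x) = L (a 0) + x 0 * (L (a 1) - L (a 0)) + x 1 * (L (a 2) - L (a 0)) := by
  have h1 : Taff a x = Mlin a x +ᵥ a 0 := rfl
  rw [h1, AffineMap.map_vadd, Mlin_apply, map_add, _root_.map_smul, _root_.map_smul]
  have h2 : (a 1 - a 0) = a 1 -ᵥ a 0 := rfl
  have h3 : (a 2 - a 0) = a 2 -ᵥ a 0 := rfl
  rw [h2, h3, AffineMap.linearMap_vsub, AffineMap.linearMap_vsub]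
  simp [vsub_eq_sub, vadd_eq_add]
  ring

def gsub : Fin 2 → MvPolynomial (Fin 2) ℝ :=
  fun j => C (a 0 j) + C (a 1 j - a 0 j) * X 0 + C (a 2 j - a 0 j) * X 1

lemma eval_eq_aeval (y : Fin 2 → ℝ) (p : MvPolynomial (Fin 2) ℝ) :
    aeval y p = eval y p := by
  rw [aeval_def, Algebra.algebraMap_self]; rfl

lemma comp_eval (p : MvPolynomial (Fin 2) ℝ) (x : E2) :
    eval (fun i => (Taff a x) i) p = eval (fun i => x i) (bind₁ (gsub a) p) := by
  have h := aeval_bind₁ (R := ℝ) (S := ℝ) (fun i => x i) (gsub a) p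
  simp only [eval_eq_aeval] at h
  rw [h]
  have harg : (fun i => (Taff a) x i) = (fun i => (eval fun i' => x i') (gsub a i)) := by
    funext j
    simp [gsub, Taff_coord]
    ring
  rw [harg]

variable {a}

lemma indep_pair (ha : AffineIndependent ℝ a) :
    ∀ c d : ℝ, c • (a 1 - a 0) + d • (a 2 - a 0) = 0 → c = 0 ∧ d = 0 := by
  intro c d h
  have key := affineIndependent_iff.mp ha Finset.univ ![-(c + d), c, d]
    (by simp [Fin.sum_univ_three])
    (by
      rw [Fin.sum_univ_three]
      simp only [Matrix.cons_val_zero, Matrix.cons_val_one, Matrix.head_cons,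
        Matrix.cons_val_two, Matrix.tail_cons]
      rw [← h]; module)
  constructor
  · simpa using key 1 (Finset.mem_univ _)
  · simpa using key 2 (Finset.mem_univ _)

lemma Minj (ha : AffineIndependent ℝ a) : Function.Injective (Mlin a) := by
  rw [injective_iff_map_eq_zero]
  intro x hx
  rw [Mlin_apply] at hx
  have := indep_pair ha (x 0) (x 1) hx
  refine PiLp.ext fun j => ?_
  fin_cases j
  · exact this.1
  · exact this.2

lemma Mdet (ha : AffineIndependent ℝ a) : LinearMap.det (Mlin a) ≠ 0 := by
  intro h
  obtain ⟨⟨x, hxmem⟩, hxne⟩ :=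
    Submodule.nonzero_mem_of_bot_lt (LinearMap.bot_lt_ker_of_det_eq_zero h)
  apply hxne
  have hx0 : x = 0 := Minj ha (by simpa [LinearMap.mem_ker] using hxmem)
  exact Subtype.ext (by simp [hx0])

lemma Timage (ha : AffineIndependent ℝ a) :
    Taff a '' Δref = convexHull ℝ (Set.range a) := by
  rw [Δref, AffineMap.image_convexHull, ← Set.range_comp]
  have : Taff a ∘ refV = a := by
    funext i
    fin_cases i
    · show Taff a 0 = a 0
      simp [Taff_apply, map_zero]
    · show Taff a (EuclideanSpace.single 0 1) = a 1
      rw [Taff_apply, Mlin_apply]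
      rw [EuclideanSpace.single_apply, EuclideanSpace.single_apply]
      norm_num
    · show Taff a (EuclideanSpace.single 1 1) = a 2
      rw [Taff_apply, Mlin_apply]
      rw [EuclideanSpace.single_apply, EuclideanSpace.single_apply]
      norm_num
  rw [this]

lemma cov (ha : AffineIndependent ℝ a) (g : E2 → ℝ) :
    ∫ y in convexHull ℝ (Set.range a), g y =
      |LinearMap.det (Mlin a)| * ∫ x in Δref, g (Taff a x) := by
  have hinj : Set.InjOn (Taff a) Δref := by
    intro x _ y _ hxy
    rw [Taff_apply, Taff_apply] at hxy
    exact Minj ha (add_right_cancel hxy)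
  rw [← Timage ha]
  have hder : ∀ x ∈ Δref, HasFDerivWithinAt (Taff a)
      ((Mlin a).toContinuousLinearMap) Δref x := by
    intro x hx
    have : HasFDerivAt (fun y => Mlin a y + a 0) ((Mlin a).toContinuousLinearMap) x :=
      ((Mlin a).toContinuousLinearMap.hasFDerivAt).add_const (a 0)
    exact this.hasFDerivWithinAt
  rw [integral_image_eq_integral_abs_det_fderiv_smul volume measΔ hder hinj g]
  simp only [LinearMap.coe_toContinuousLinearMap, ContinuousLinearMap.det,
    smul_eq_mul]
  rw [integral_const_mul]

end
end EBNE

open MvPolynomial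

/-- Element bubble function estimate (4.1): there is `C > 0` depending only on the
polynomial degree `k` such that for every nondegenerate triangle
`τ = convexHull {a 0, a 1, a 2}` in `ℝ²` with barycentric coordinate functions
`L 0, L 1, L 2`, element bubble `ψ_τ = 27 (L 0)(L 1)(L 2)`, and every polynomial `v`
of total degree at most `k`,
`∫_τ ψ_τ v² ≤ ∫_τ v² ≤ C ∫_τ ψ_τ v²`. -/
theorem element_bubble_norm_equivalence (k : ℕ) :
    ∃ C : ℝ, 0 < C ∧
      ∀ (a : Fin 3 → EuclideanSpace ℝ (Fin 2)), AffineIndependent ℝ a →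
      ∀ (L : Fin 3 → (EuclideanSpace ℝ (Fin 2) →ᵃ[ℝ] ℝ)),
        (∀ i j, L i (a j) = if i = j then 1 else 0) →
      ∀ (p : MvPolynomial (Fin 2) ℝ), p.totalDegree ≤ k →
        letI τ : Set (EuclideanSpace ℝ (Fin 2)) := convexHull ℝ (Set.range a)
        letI ψ : EuclideanSpace ℝ (Fin 2) → ℝ := fun x => 27 * L 0 x * L 1 x * L 2 x
        letI v : EuclideanSpace ℝ (Fin 2) → ℝ := fun x => MvPolynomial.eval (fun i => x i) p
        (∫ x in τ, ψ x * v x ^ 2) ≤ (∫ x in τ, v x ^ 2) ∧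
        (∫ x in τ, v x ^ 2) ≤ C * ∫ x in τ, ψ x * v x ^ 2 := by
  obtain ⟨C, hC, href⟩ := EBNE.refBound k
  refine ⟨C, hC, ?_⟩
  intro a ha L hL p hp
  have hτcomp : IsCompact (convexHull ℝ (Set.range a)) := (Set.finite_range a).isCompact_convexHull ℝ
  have hτmeas : MeasurableSet (convexHull ℝ (Set.range a)) := hτcomp.isClosed.measurableSet
  have hcontL : ∀ i, Continuous fun x : EBNE.E2 => L i x :=
    fun i => (L i).continuous_of_finiteDimensional
  have hψcont : Continuous fun x : EBNE.E2 => 27 * L 0 x * L 1 x * L 2 x :=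
    ((continuous_const.mul (hcontL 0)).mul (hcontL 1)).mul (hcontL 2)
  have hvcont := EBNE.contEval p
  have hbounds : ∀ x ∈ convexHull ℝ (Set.range a),
      0 ≤ L 0 x ∧ 0 ≤ L 1 x ∧ 0 ≤ L 2 x ∧ L 0 x + L 1 x + L 2 x = 1 := by
    have hsum : Convex ℝ {x : EBNE.E2 | L 0 x + L 1 x + L 2 x = 1} := by
      have hset : {x : EBNE.E2 | L 0 x + L 1 x + L 2 x = 1} = (L 0 + L 1 + L 2) ⁻¹' {1} := by
        ext x
        simp [AffineMap.coe_add]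
      rw [hset]
      exact (convex_singleton 1).affine_preimage _
    have hsubset : convexHull ℝ (Set.range a) ⊆
        {x : EBNE.E2 | 0 ≤ L 0 x} ∩ ({x | 0 ≤ L 1 x} ∩ ({x | 0 ≤ L 2 x} ∩
          {x | L 0 x + L 1 x + L 2 x = 1})) := by
      apply convexHull_min
      · rintro y ⟨j, rfl⟩
        fin_cases j <;> refine ⟨?_, ?_, ?_, ?_⟩ <;> simp [hL]
      · exact ((convex_Ici (0:ℝ)).affine_preimage (L 0)).inter
          (((convex_Ici (0:ℝ)).affine_preimage (L 1)).inter
            (((convex_Ici (0:ℝ)).affine_preimage (L 2)).inter hsum))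
    intro x hx
    obtain ⟨h0, h1, h2, h3⟩ := hsubset hx
    exact ⟨h0, h1, h2, h3⟩
  have hint2 : IntegrableOn (fun x : EBNE.E2 => (eval (fun i => x i) p)^2)
      (convexHull ℝ (Set.range a)) :=
    (hvcont.pow 2).continuousOn.integrableOn_compact hτcomp
  have hint1 : IntegrableOn
      (fun x : EBNE.E2 => 27 * L 0 x * L 1 x * L 2 x * (eval (fun i => x i) p)^2)
      (convexHull ℝ (Set.range a)) :=
    (hψcont.mul (hvcont.pow 2)).continuousOn.integrableOn_compact hτcomp
  constructor
  · -- first inequality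
    show (∫ x in convexHull ℝ (Set.range a),
        27 * L 0 x * L 1 x * L 2 x * (eval (fun i => x i) p)^2) ≤
      ∫ x in convexHull ℝ (Set.range a), (eval (fun i => x i) p)^2
    apply setIntegral_mono_on hint1 hint2 hτmeas
    intro x hx
    obtain ⟨h0, h1, h2, h3⟩ := hbounds x hx
    have h27 := EBNE.amgm27 _ _ _ h0 h1 h2 h3
    nlinarith [mul_nonneg (sub_nonneg.mpr h27) (sq_nonneg (eval (fun i => x i) p))]
  · -- second inequality
    set q : MvPolynomial (Fin 2) ℝ := bind₁ (EBNE.gsub a) p with hqdef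
    have hq : q.totalDegree ≤ k :=
      le_trans (EBNE.totalDegree_bind₁_le _ (fun j => EBNE.deg_aff_le _ _ _) p) hp
    have cov1 := EBNE.cov ha (fun y => (eval (fun i => y i) p)^2)
    have cov2 := EBNE.cov ha (fun y => 27 * L 0 y * L 1 y * L 2 y * (eval (fun i => y i) p)^2)
    have hL0T : ∀ x : EBNE.E2, L 0 (EBNE.Taff a x) = 1 - x 0 - x 1 := by
      intro x; rw [EBNE.L_comp_gen]; simp [hL]; ring
    have hL1T : ∀ x : EBNE.E2, L 1 (EBNE.Taff a x) = x 0 := by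
      intro x; rw [EBNE.L_comp_gen]; simp [hL]
    have hL2T : ∀ x : EBNE.E2, L 2 (EBNE.Taff a x) = x 1 := by
      intro x; rw [EBNE.L_comp_gen]; simp [hL]
    have e1 : (∫ x in EBNE.Δref, (eval (fun i => (EBNE.Taff a x) i) p)^2) =
        ∫ x in EBNE.Δref, (eval (fun i => x i) q)^2 := by
      apply integral_congr_ae
      apply Filter.Eventually.of_forall
      intro x
      show (eval fun i => (EBNE.Taff a) x i) p ^ 2 = (eval fun i => x i) q ^ 2
      rw [EBNE.comp_eval]
    have e2 : (∫ x in EBNE.Δref, 27 * L 0 (EBNE.Taff a x) * L 1 (EBNE.Taff a x) *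
          L 2 (EBNE.Taff a x) * (eval (fun i => (EBNE.Taff a x) i) p)^2) =
        ∫ x in EBNE.Δref, EBNE.ψref x * (eval (fun i => x i) q)^2 := by
      apply integral_congr_ae
      apply Filter.Eventually.of_forall
      intro x
      show 27 * (L 0) ((EBNE.Taff a) x) * (L 1) ((EBNE.Taff a) x) * (L 2) ((EBNE.Taff a) x) *
          (eval fun i => (EBNE.Taff a) x i) p ^ 2 = EBNE.ψref x * (eval fun i => x i) q ^ 2
      rw [hL0T, hL1T, hL2T, EBNE.comp_eval]
      simp only [EBNE.ψref]
      ring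
    show (∫ x in convexHull ℝ (Set.range a), (eval (fun i => x i) p)^2) ≤
      C * ∫ x in convexHull ℝ (Set.range a),
        27 * L 0 x * L 1 x * L 2 x * (eval (fun i => x i) p)^2
    calc (∫ x in convexHull ℝ (Set.range a), (eval (fun i => x i) p)^2)
        = |LinearMap.det (EBNE.Mlin a)| * ∫ x in EBNE.Δref, (eval (fun i => x i) q)^2 := by
          rw [cov1, e1]
      _ ≤ |LinearMap.det (EBNE.Mlin a)| *
          (C * ∫ x in EBNE.Δref, EBNE.ψref x * (eval (fun i => x i) q)^2) :=
          mul_le_mul_of_nonneg_left (href q hq) (abs_nonneg _)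
      _ = C * (|LinearMap.det (EBNE.Mlin a)| *
          ∫ x in EBNE.Δref, EBNE.ψref x * (eval (fun i => x i) q)^2) := by ring
      _ = C * ∫ x in convexHull ℝ (Set.range a),
          27 * L 0 x * L 1 x * L 2 x * (eval (fun i => x i) p)^2 := by
          rw [← e2, ← cov2]
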